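/- arXiv:2204.06632 — 2 statements merged into one kernel-verified Lean document; each statement's English description precedes it below -/
import Mathlib

section
/- Let p be a positive natural number, let S be a finite index set partitioned into two disjoint subsets T and D (with S = T ∪ D), let W : S → ℝ^p be a covariate map, let π : S → ℝ satisfy π(t) > 0 for all t ∈ S, and let θ ∈ ℝ^p. Define the log-linear hazard h(t) = exp(⟨W(t), θ⟩). Then the approximate score vector satisfies the identity ∑_{t ∈ T} (π(t)/(π(t) + h(t))) • W(t) − ∑_{t ∈ D} (h(t)/(π(t) + h(t))) • W(t) = ∑_{t ∈ S} ( 1[t ∈ D] − 1/(1 + exp(−(⟨−W(t), θ⟩ + log π(t)))) ) • (−W(t)); i.e., the approximate score function equals the score function of a logistic regression with binary response 1[t ∈ D], covariates −W(t), and offset log π(t). -/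
open Finset

lemma frac_sub_one (x y : ℝ) (h : 0 < x + y) :
    x / (x + y) - 1 = -(y / (x + y)) := by
  field_simp
  ring

lemma logistic_key (a π : ℝ) (hπ : 0 < π) :
    1 / (1 + Real.exp (-(-a + Real.log π))) = π / (π + Real.exp a) := by
  have h1 : Real.exp (-(-a + Real.log π)) = Real.exp a / π := by
    rw [neg_add, neg_neg, Real.exp_add, Real.exp_neg, Real.exp_log hπ]
    ring
  rw [h1]
  rw [div_eq_div_iff (by positivity) (by positivity)]
  field_simp

/-- The approximate subsampling score function under a log-linear hazard
equals the score function of a logistic regression with binary response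
`1[t ∈ D]`, covariates `−W(t)`, and offset `log π(t)`. -/
theorem approx_score_eq_logistic_score
    {p : ℕ} (hp : 0 < p) {ι : Type*} [DecidableEq ι]
    (S T D : Finset ι) (hTD : Disjoint T D) (hS : S = T ∪ D)
    (W : ι → EuclideanSpace ℝ (Fin p)) (π : ι → ℝ)
    (hπ : ∀ t ∈ S, 0 < π t) (θ : EuclideanSpace ℝ (Fin p)) :
    (∑ t ∈ T, (π t / (π t + Real.exp (inner ℝ (W t) θ : ℝ))) • W t)
      - (∑ t ∈ D, (Real.exp (inner ℝ (W t) θ : ℝ) /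
            (π t + Real.exp (inner ℝ (W t) θ : ℝ))) • W t)
    = ∑ t ∈ S,
        (((if t ∈ D then (1 : ℝ) else 0)
            - 1 / (1 + Real.exp (-((inner ℝ (-W t) θ : ℝ) + Real.log (π t)))))
          • (-W t)) := by
  subst hS
  rw [Finset.sum_union hTD]
  have hkey : ∀ t ∈ T ∪ D,
      1 / (1 + Real.exp (-((inner ℝ (-W t) θ : ℝ) + Real.log (π t))))
        = π t / (π t + Real.exp (inner ℝ (W t) θ : ℝ)) := by
    intro t ht
    have : (inner ℝ (-W t) θ : ℝ) = -(inner ℝ (W t) θ : ℝ) := by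
      simp [inner_neg_left]
    rw [this, logistic_key _ _ (hπ t ht)]
  have hT : ∑ t ∈ T,
      (((if t ∈ D then (1 : ℝ) else 0)
          - 1 / (1 + Real.exp (-((inner ℝ (-W t) θ : ℝ) + Real.log (π t)))))
        • (-W t))
      = ∑ t ∈ T, (π t / (π t + Real.exp (inner ℝ (W t) θ : ℝ))) • W t := by
    refine Finset.sum_congr rfl fun t ht => ?_
    have htD : t ∉ D := Finset.disjoint_left.mp hTD ht
    rw [hkey t (Finset.mem_union_left _ ht), if_neg htD]
    rw [zero_sub, neg_smul, smul_neg, neg_neg]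
  have hD : ∑ t ∈ D,
      (((if t ∈ D then (1 : ℝ) else 0)
          - 1 / (1 + Real.exp (-((inner ℝ (-W t) θ : ℝ) + Real.log (π t)))))
        • (-W t))
      = -∑ t ∈ D, (Real.exp (inner ℝ (W t) θ : ℝ) /
            (π t + Real.exp (inner ℝ (W t) θ : ℝ))) • W t := by
    rw [← Finset.sum_neg_distrib]
    refine Finset.sum_congr rfl fun t ht => ?_
    have hpos : 0 < π t + Real.exp (inner ℝ (W t) θ : ℝ) := by
      have := hπ t (Finset.mem_union_right _ ht)
      positivity
    rw [hkey t (Finset.mem_union_right _ ht), if_pos ht]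
    rw [smul_neg, ← neg_smul, ← neg_smul]
    congr 1
    rw [neg_sub]
    exact frac_sub_one _ _ hpos
  rw [hT, hD]
  abel
end

section
/- Let p be a positive natural number, let S be a finite index set partitioned into disjoint subsets T (event times) and D (subsampled times), let W : S → ℝ^p, let π : S → ℝ with π(t) > 0, and let θ ∈ ℝ^p. Define h(t) = exp(⟨W(t), θ⟩), the weight w(t) = π(t)/(π(t) + h(t)), the logistic covariates W̃(t) = −W(t), and the logistic probability μ(t) = 1/(1 + exp(−(⟨W̃(t), θ⟩ + log π(t)))). Then for every t ∈ S, w(t)·(1 − w(t))·(W(t)·W(t)ᵀ) = μ(t)·(1 − μ(t))·(W̃(t)·W̃(t)ᵀ), and consequently ∑_{t ∈ S} w(t)(1 − w(t))·W(t)W(t)ᵀ = ∑_{t ∈ S} μ(t)(1 − μ(t))·W̃(t)W̃(t)ᵀ; i.e., the sampling-unbiased estimator of the information matrix Ξ(θ) equals the Fisher information of the logistic regression with response 1[t ∈ D], covariates W̃(t), and offset log π(t). -/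
open Finset Matrix

/-- The sampling-unbiased estimator of the information matrix equals the
Fisher information of the logistic regression with response `1[t ∈ D]`,
covariates `W̃(t) = −W(t)`, and offset `log π(t)`. -/
theorem info_estimator_eq_logistic_fisher
    {p : ℕ} (hp : 0 < p) {ι : Type*} [DecidableEq ι]
    (S T D : Finset ι) (hTD : Disjoint T D) (hS : S = T ∪ D)
    (W : ι → EuclideanSpace ℝ (Fin p)) (π : ι → ℝ)
    (hπ : ∀ t ∈ S, 0 < π t) (θ : EuclideanSpace ℝ (Fin p)) :
    (∀ t ∈ S,
      ((π t / (π t + Real.exp (inner ℝ (W t) θ : ℝ)))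
          * (1 - π t / (π t + Real.exp (inner ℝ (W t) θ : ℝ))))
          • Matrix.vecMulVec (W t) (W t)
        = ((1 / (1 + Real.exp (-((inner ℝ (-W t) θ : ℝ) + Real.log (π t)))))
            * (1 - 1 / (1 + Real.exp (-((inner ℝ (-W t) θ : ℝ) + Real.log (π t))))))
          • Matrix.vecMulVec (-W t) (-W t)) ∧
    (∑ t ∈ S,
        ((π t / (π t + Real.exp (inner ℝ (W t) θ : ℝ)))
          * (1 - π t / (π t + Real.exp (inner ℝ (W t) θ : ℝ))))
          • Matrix.vecMulVec (W t) (W t)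
      = ∑ t ∈ S,
        ((1 / (1 + Real.exp (-((inner ℝ (-W t) θ : ℝ) + Real.log (π t)))))
          * (1 - 1 / (1 + Real.exp (-((inner ℝ (-W t) θ : ℝ) + Real.log (π t))))))
          • Matrix.vecMulVec (-W t) (-W t)) := by
  have key : ∀ t ∈ S,
      ((π t / (π t + Real.exp (inner ℝ (W t) θ : ℝ)))
          * (1 - π t / (π t + Real.exp (inner ℝ (W t) θ : ℝ))))
          • Matrix.vecMulVec (W t) (W t)
        = ((1 / (1 + Real.exp (-((inner ℝ (-W t) θ : ℝ) + Real.log (π t)))))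
            * (1 - 1 / (1 + Real.exp (-((inner ℝ (-W t) θ : ℝ) + Real.log (π t))))))
          • Matrix.vecMulVec (-W t) (-W t) := by
    intro t ht
    have hπt := hπ t ht
    have hmat : Matrix.vecMulVec (-W t) (-W t) = Matrix.vecMulVec (W t) (W t) := by
      ext i j
      simp [Matrix.vecMulVec_apply]
    have hinner : (inner ℝ (-W t) θ : ℝ) = -(inner ℝ (W t) θ : ℝ) := by
      simp
    have hexp : Real.exp (-((inner ℝ (-W t) θ : ℝ) + Real.log (π t)))
        = Real.exp (inner ℝ (W t) θ : ℝ) / π t := by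
      rw [hinner, neg_add, neg_neg, Real.exp_add, Real.exp_neg, Real.exp_log hπt,
        div_eq_mul_inv]
    have hscal : 1 / (1 + Real.exp (-((inner ℝ (-W t) θ : ℝ) + Real.log (π t))))
        = π t / (π t + Real.exp (inner ℝ (W t) θ : ℝ)) := by
      rw [hexp]
      rw [div_eq_div_iff]
      · field_simp
      · positivity
      · positivity
    rw [hmat, hscal]
  exact ⟨key, Finset.sum_congr rfl key⟩
end
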